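/- Let A be a complete noetherian adic ring with ideal of definition I, φ an automorphism of A, and M a finitely generated A-module with a φ-semilinear endomorphism F. Then M = M_ord ⊕ M_nil, where M_ord is the maximal F-stable submodule on which F is bijective and M_nil is the maximal F-stable submodule on which F is topologically nilpotent (i.e., for every n there is k with F^k(M_nil) ⊆ I^n·M_nil). -/

import Mathlib

open Function Submodule

section Aux
variable {A M : Type*} [CommRing A] [AddCommGroup M] [Module A M]

/-- iterate semilinearity -/
theorem TF.iter_smul (φ : A ≃+* A) (F : M →+ M)
    (hF : ∀ (a : A) (m : M), F (a • m) = φ a • F m) :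
    ∀ (k : ℕ) (a : A) (m : M), (⇑F)^[k] (a • m) = ((⇑φ)^[k] a) • (⇑F)^[k] m := by
  intro k
  induction k with
  | zero => intro a m; rfl
  | succ k ih =>
    intro a m
    rw [Function.iterate_succ_apply, Function.iterate_succ_apply,
      Function.iterate_succ_apply, hF, ih]

theorem TF.phi_pow_mem (I : Ideal A) (φ : A ≃+* A) (hφI : I.map (φ : A →+* A) = I)
    {n : ℕ} {a : A} (ha : a ∈ I ^ n) : φ a ∈ I ^ n := by
  have : φ a ∈ (I ^ n).map (φ : A →+* A) := Ideal.mem_map_of_mem _ ha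
  rwa [Ideal.map_pow, hφI] at this

theorem TF.phi_iter_mem (I : Ideal A) (φ : A ≃+* A) (hφI : I.map (φ : A →+* A) = I)
    {n : ℕ} (k : ℕ) {a : A} (ha : a ∈ I ^ n) : (⇑φ)^[k] a ∈ I ^ n := by
  induction k generalizing a with
  | zero => exact ha
  | succ k ih => rw [Function.iterate_succ_apply]; exact ih (TF.phi_pow_mem I φ hφI ha)

/-- F preserves I^n • ⊤ -/
theorem TF.FJ (I : Ideal A) (φ : A ≃+* A) (hφI : I.map (φ : A →+* A) = I) (F : M →+ M)
    (hF : ∀ (a : A) (m : M), F (a • m) = φ a • F m) (n : ℕ) :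
    ∀ m ∈ (I ^ n • ⊤ : Submodule A M), F m ∈ (I ^ n • ⊤ : Submodule A M) := by
  intro m hm
  refine Submodule.smul_induction_on hm (fun a ha x _ => ?_) (fun x y hx hy => ?_)
  · rw [hF]
    exact Submodule.smul_mem_smul (TF.phi_pow_mem I φ hφI ha) mem_top
  · rw [map_add]; exact add_mem hx hy

theorem TF.FJk (I : Ideal A) (φ : A ≃+* A) (hφI : I.map (φ : A →+* A) = I) (F : M →+ M)
    (hF : ∀ (a : A) (m : M), F (a • m) = φ a • F m) (n k : ℕ) :
    ∀ m ∈ (I ^ n • ⊤ : Submodule A M), (⇑F)^[k] m ∈ (I ^ n • ⊤ : Submodule A M) := by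
  induction k with
  | zero => intro m hm; exact hm
  | succ k ih =>
    intro m hm
    rw [Function.iterate_succ_apply]
    exact ih _ (TF.FJ I φ hφI F hF n m hm)

/-- the range of F^[k] as a submodule -/
def TF.rng (φ : A ≃+* A) (F : M →+ M)
    (hF : ∀ (a : A) (m : M), F (a • m) = φ a • F m) (k : ℕ) : Submodule A M where
  carrier := Set.range (⇑F)^[k]
  zero_mem' := ⟨0, iterate_map_zero F k⟩
  add_mem' := by
    rintro x y ⟨x', rfl⟩ ⟨y', rfl⟩
    exact ⟨x' + y', iterate_map_add F k x' y'⟩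
  smul_mem' := by
    rintro a x ⟨x', rfl⟩
    refine ⟨((⇑φ.symm)^[k] a) • x', ?_⟩
    rw [TF.iter_smul φ F hF]
    congr 1
    exact (Function.LeftInverse.iterate φ.apply_symm_apply k) a

theorem TF.mem_rng {φ : A ≃+* A} {F : M →+ M}
    {hF : ∀ (a : A) (m : M), F (a • m) = φ a • F m} {k : ℕ} {m : M} :
    m ∈ TF.rng φ F hF k ↔ ∃ x, (⇑F)^[k] x = m := Iff.rfl

/-- the kernel of F^[k] mod I^n as a submodule -/
def TF.kerS (I : Ideal A) (φ : A ≃+* A) (F : M →+ M)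
    (hF : ∀ (a : A) (m : M), F (a • m) = φ a • F m) (n k : ℕ) : Submodule A M where
  carrier := {m | (⇑F)^[k] m ∈ (I ^ n • ⊤ : Submodule A M)}
  zero_mem' := by simp [iterate_map_zero F k]
  add_mem' := by
    intro x y hx hy
    simp only [Set.mem_setOf_eq, iterate_map_add F k] at *
    exact add_mem hx hy
  smul_mem' := by
    intro a x hx
    simp only [Set.mem_setOf_eq, TF.iter_smul φ F hF] at *
    exact Submodule.smul_mem _ _ hx

theorem TF.mem_kerS {I : Ideal A} {φ : A ≃+* A} {F : M →+ M}
    {hF : ∀ (a : A) (m : M), F (a • m) = φ a • F m} {n k : ℕ} {m : M} :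
    m ∈ TF.kerS I φ F hF n k ↔ (⇑F)^[k] m ∈ (I ^ n • ⊤ : Submodule A M) := Iff.rfl

end Aux

section Aux2
variable {A M : Type*} [CommRing A] [AddCommGroup M] [Module A M]

theorem TF.hausdorff [IsNoetherianRing A] (I : Ideal A) [IsAdicComplete I A]
    [Module.Finite A M] {m : M} (hm : ∀ n : ℕ, m ∈ (I ^ n • ⊤ : Submodule A M)) : m = 0 := by
  obtain ⟨s, π, hπ⟩ := Module.Finite.exists_fin' A M
  let N := (Fin s → A) ⧸ LinearMap.ker π
  let e : N ≃ₗ[A] M := π.quotKerEquivOfSurjective hπ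
  haveI : Module.Finite A N :=
    Module.Finite.of_surjective (LinearMap.ker π).mkQ (Submodule.mkQ_surjective _)
  have hm' : ∀ n : ℕ, e.symm m ∈ (I ^ n • ⊤ : Submodule A N) := by
    intro n
    have h1 : e.symm m ∈ Submodule.map (e.symm : M →ₗ[A] N) (I ^ n • ⊤ : Submodule A M) :=
      Submodule.mem_map_of_mem (hm n)
    rwa [Submodule.map_smul'', Submodule.map_top, LinearEquiv.range] at h1
  have hmem : e.symm m ∈ (⨅ i : ℕ, I ^ i • ⊤ : Submodule A N) := Submodule.mem_iInf _ |>.mpr hm'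
  obtain ⟨r, hr⟩ := (Ideal.mem_iInf_smul_pow_eq_bot_iff I (e.symm m)).mp hmem
  have hrj : (r : A) ∈ (⊥ : Ideal A).jacobson := IsAdicComplete.le_jacobson_bot I r.2
  have hu : IsUnit (1 - (r : A)) := by
    refine Ideal.isUnit_of_sub_one_mem_jacobson_bot _ ?_
    simpa using (Submodule.neg_mem _ hrj)
  obtain ⟨u, hu⟩ := hu
  have h0 : (1 - (r : A)) • e.symm m = 0 := by
    rw [sub_smul, one_smul, hr, sub_self]
  have h2 := congrArg (fun x => (↑u⁻¹ : A) • x) h0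
  simp only [← hu, smul_smul] at h2
  have h3 : e.symm m = 0 := by
    simpa using h2
  have := congrArg e h3
  simpa using this

theorem TF.pi_precomplete (I : Ideal A) [IsAdicComplete I A] (s : ℕ)
    (g : ℕ → (Fin s → A))
    (hg : ∀ a b : ℕ, a ≤ b → g a - g b ∈ (I ^ a • ⊤ : Submodule A (Fin s → A))) :
    ∃ L, ∀ n, g n - L ∈ (I ^ n • ⊤ : Submodule A (Fin s → A)) := by
  have hIa : ∀ a : ℕ, (I ^ a • ⊤ : Submodule A A) = I ^ a := by
    intro a; rw [smul_eq_mul, Ideal.mul_top]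
  have hcoord : ∀ (a : ℕ) (x : Fin s → A), x ∈ (I ^ a • ⊤ : Submodule A (Fin s → A)) →
      ∀ i, x i ∈ I ^ a := by
    intro a x hx i
    have h1 := Submodule.mem_map_of_mem
      (f := LinearMap.proj (R := A) (φ := fun _ : Fin s => A) i) hx
    rw [Submodule.map_smul'', Submodule.map_top] at h1
    have hr : LinearMap.range (LinearMap.proj (R := A) (φ := fun _ : Fin s => A) i) = ⊤ :=
      LinearMap.range_eq_top.mpr (fun y => ⟨fun _ => y, rfl⟩)
    rw [hr, hIa] at h1
    exact h1
  have hrecon : ∀ (a : ℕ) (x : Fin s → A), (∀ i, x i ∈ I ^ a) →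
      x ∈ (I ^ a • ⊤ : Submodule A (Fin s → A)) := by
    intro a x hx
    have hxe : x = ∑ i : Fin s, x i • (Pi.single (M := fun _ : Fin s => A) i 1) := by
      funext j
      simp [Pi.single_apply, mul_ite, Finset.sum_ite_eq']
    rw [hxe]
    exact Submodule.sum_mem _ fun i _ => Submodule.smul_mem_smul (hx i) mem_top
  have key : ∀ i : Fin s, ∃ L : A, ∀ n, g n i - L ∈ I ^ n := by
    intro i
    obtain ⟨L, hL⟩ := IsPrecomplete.prec (inferInstance : IsPrecomplete I A)
      (f := fun n => g n i)
      (fun {a b} hab => SModEq.sub_mem.mpr (by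
        rw [hIa]
        exact hcoord a _ (hg a b hab) i))
    exact ⟨L, fun n => by have := SModEq.sub_mem.mp (hL n); rwa [hIa] at this⟩
  choose L hL using key
  refine ⟨L, fun n => hrecon n _ fun i => ?_⟩
  exact hL i n

theorem TF.precomplete [IsNoetherianRing A] (I : Ideal A) [IsAdicComplete I A]
    [Module.Finite A M] (f : ℕ → M)
    (hf : ∀ a b : ℕ, a ≤ b → f a - f b ∈ (I ^ a • ⊤ : Submodule A M)) :
    ∃ L, ∀ n, f n - L ∈ (I ^ n • ⊤ : Submodule A M) := by
  obtain ⟨s, π, hπ⟩ := Module.Finite.exists_fin' A M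
  have hmap : ∀ a : ℕ, Submodule.map π (I ^ a • ⊤ : Submodule A (Fin s → A)) =
      (I ^ a • ⊤ : Submodule A M) := by
    intro a
    rw [Submodule.map_smul'', Submodule.map_top, LinearMap.range_eq_top.mpr hπ]
  obtain ⟨x0, hx0⟩ := hπ (f 0)
  have hd : ∀ n : ℕ, ∃ d, d ∈ (I ^ n • ⊤ : Submodule A (Fin s → A)) ∧ π d = f (n + 1) - f n := by
    intro n
    have : f (n + 1) - f n ∈ (I ^ n • ⊤ : Submodule A M) := by
      have := hf n (n + 1) (Nat.le_succ n)
      simpa using Submodule.neg_mem _ this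
    rw [← hmap n] at this
    obtain ⟨d, hd1, hd2⟩ := this
    exact ⟨d, hd1, hd2⟩
  choose d hd1 hd2 using hd
  set g : ℕ → (Fin s → A) := fun n => x0 + ∑ i ∈ Finset.range n, d i with hgdef
  have hπg : ∀ n, π (g n) = f n := by
    intro n
    induction n with
    | zero => simpa [hgdef] using hx0
    | succ n ih =>
      rw [hgdef]
      simp only [Finset.sum_range_succ, ← add_assoc]
      rw [map_add, hd2 n]
      rw [hgdef] at ih
      rw [ih]
      abel
  have hJle : ∀ {a b : ℕ}, a ≤ b → (I ^ b • ⊤ : Submodule A (Fin s → A)) ≤ I ^ a • ⊤ :=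
    fun {a b} hab => Submodule.smul_mono_left (Ideal.pow_le_pow_right hab)
  have hgc : ∀ a b : ℕ, a ≤ b → g a - g b ∈ (I ^ a • ⊤ : Submodule A (Fin s → A)) := by
    intro a b hab
    have : g a - g b = -∑ i ∈ Finset.Ico a b, d i := by
      rw [hgdef]
      simp only [add_sub_add_left_eq_sub]
      rw [Finset.sum_Ico_eq_sub _ hab]
      abel
    rw [this]
    refine Submodule.neg_mem _ (Submodule.sum_mem _ fun i hi => ?_)
    exact hJle (Finset.mem_Ico.mp hi).1 (hd1 i)
  obtain ⟨L', hL'⟩ := TF.pi_precomplete I s g hgc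
  refine ⟨π L', fun n => ?_⟩
  have : f n - π L' = π (g n - L') := by rw [map_sub, hπg]
  rw [this, ← hmap n]
  exact Submodule.mem_map_of_mem (hL' n)

end Aux2

section Aux3
variable {A M : Type*} [CommRing A] [AddCommGroup M] [Module A M]

theorem TF.artinian_chain (I : Ideal A) [Module.Finite A M] (n : ℕ)
    (hart : IsArtinianRing (A ⧸ I ^ n)) (g : ℕ → Submodule A M) (hg : Antitone g)
    (hge : ∀ j, (I ^ n • ⊤ : Submodule A M) ≤ g j) :
    ∃ k, ∀ j, k ≤ j → g j = g k := by
  set p : Submodule A M := I ^ n • ⊤ with hp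
  let Q := M ⧸ p
  haveI : IsScalarTower A (A ⧸ I ^ n) Q := by
    constructor
    intro a b x
    obtain ⟨c, rfl⟩ := Ideal.Quotient.mk_surjective b
    obtain ⟨m, rfl⟩ := Submodule.Quotient.mk_surjective _ x
    show Submodule.Quotient.mk ((a * c) • m) = Submodule.Quotient.mk (a • c • m)
    rw [mul_smul]
  haveI : Module.Finite A Q := Module.Finite.of_surjective p.mkQ (Submodule.mkQ_surjective _)
  haveI : Module.Finite (A ⧸ I ^ n) Q := Module.Finite.of_restrictScalars_finite A _ _
  haveI := hart
  haveI hQart : IsArtinian (A ⧸ I ^ n) Q := isArtinian_of_fg_of_artinian'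
  -- lift A-submodules of Q to (A ⧸ I^n)-submodules
  let lift : Submodule A Q → Submodule (A ⧸ I ^ n) Q := fun q =>
    { carrier := q
      zero_mem' := q.zero_mem
      add_mem' := fun hx hy => q.add_mem hx hy
      smul_mem' := by
        intro b x hx
        obtain ⟨c, rfl⟩ := Ideal.Quotient.mk_surjective b
        obtain ⟨m, rfl⟩ := Submodule.Quotient.mk_surjective _ x
        show (Submodule.Quotient.mk (c • m) : Q) ∈ q
        exact q.smul_mem c hx }
  have hliftle : ∀ {q q' : Submodule A Q}, q ≤ q' → lift q ≤ lift q' := fun h x hx => h hx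
  let ch : ℕ →o (Submodule (A ⧸ I ^ n) Q)ᵒᵈ :=
    ⟨fun j => lift ((g j).map p.mkQ), fun a b hab =>
      hliftle (Submodule.map_mono (hg hab))⟩
  obtain ⟨k, hk⟩ := monotone_stabilizes_iff_artinian.mpr hQart ch
  refine ⟨k, fun j hj => ?_⟩
  have h1 : lift ((g k).map p.mkQ) = lift ((g j).map p.mkQ) := hk j hj
  have h2 : (g k).map p.mkQ = (g j).map p.mkQ := by
    ext x
    exact ⟨fun hx => (SetLike.ext_iff.mp h1 x).mp hx, fun hx => (SetLike.ext_iff.mp h1 x).mpr hx⟩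
  have h3 := congrArg (Submodule.comap p.mkQ) h2
  rwa [Submodule.comap_map_mkQ, Submodule.comap_map_mkQ, sup_eq_right.mpr (hge k),
    sup_eq_right.mpr (hge j), eq_comm] at h3

end Aux3

/-- Fitting's lemma, topological version: over a complete noetherian adic ring `(A, I)`
(with `A/Iⁿ` Artinian), a `φ`-semilinear endomorphism `F` of a finitely generated
`A`-module `M` induces a decomposition `M = M_ord ⊕ M_nil` into the maximal `F`-stable
submodule on which `F` is bijective and the maximal one on which `F` is topologically
nilpotent. -/
theorem stmt_1 {A M : Type*} [CommRing A] [IsNoetherianRing A]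
    (I : Ideal A) [IsAdicComplete I A] (hart : ∀ n : ℕ, IsArtinianRing (A ⧸ I ^ n))
    (φ : A ≃+* A) (hφI : I.map (φ : A →+* A) = I)
    [AddCommGroup M] [Module A M] [Module.Finite A M]
    (F : M →+ M) (hF : ∀ (a : A) (m : M), F (a • m) = φ a • F m) :
    ∃ Mord Mnil : Submodule A M,
      IsCompl Mord Mnil ∧
      (∀ m ∈ Mord, F m ∈ Mord) ∧ Set.BijOn F Mord Mord ∧
      (∀ m ∈ Mnil, F m ∈ Mnil) ∧
      (∀ n : ℕ, ∃ k : ℕ, ∀ m ∈ Mnil, (⇑F)^[k] m ∈ (I ^ n • Mnil : Submodule A M)) ∧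
      (∀ N : Submodule A M, (∀ m ∈ N, F m ∈ N) → Set.BijOn F N N → N ≤ Mord) ∧
      (∀ N : Submodule A M, (∀ m ∈ N, F m ∈ N) →
        (∀ n : ℕ, ∃ k : ℕ, ∀ m ∈ N, (⇑F)^[k] m ∈ (I ^ n • N : Submodule A M)) →
        N ≤ Mnil) := by
  classical
  have hJle : ∀ {a b : ℕ}, a ≤ b → (I ^ b • ⊤ : Submodule A M) ≤ I ^ a • ⊤ :=
    fun {a b} hab => Submodule.smul_mono_left (Ideal.pow_le_pow_right hab)
  set Im : ℕ → ℕ → Submodule A M := fun n j => TF.rng φ F hF j ⊔ I ^ n • ⊤ with hImdef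
  set Ker : ℕ → ℕ → Submodule A M := fun n j => TF.kerS I φ F hF n j with hKerdef
  have hKer_mono : ∀ n, Monotone (Ker n) := by
    intro n
    refine monotone_nat_of_le_succ fun j m hm => ?_
    show (⇑F)^[j + 1] m ∈ (I ^ n • ⊤ : Submodule A M)
    rw [Function.iterate_succ_apply']
    exact TF.FJ I φ hφI F hF n _ hm
  have hIm_anti : ∀ n, Antitone (Im n) := by
    intro n
    refine antitone_nat_of_succ_le fun j => sup_le (le_trans ?_ le_sup_left) le_sup_right
    rintro m ⟨x, rfl⟩
    exact ⟨F x, (Function.iterate_succ_apply F j x).symm⟩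
  have stab : ∀ n, ∃ c, ∀ j, c ≤ j → Im n j = Im n c ∧ Ker n j = Ker n c := by
    intro n
    obtain ⟨kI, hkI⟩ := TF.artinian_chain I n (hart n) (Im n) (hIm_anti n) fun j => le_sup_right
    obtain ⟨kK, hkK⟩ := monotone_stabilizes_iff_noetherian.mpr
      (isNoetherian_of_isNoetherianRing_of_finite A M) ⟨Ker n, hKer_mono n⟩
    refine ⟨max kI kK, fun j hj => ⟨?_, ?_⟩⟩
    · exact (hkI j (le_trans (le_max_left _ _) hj)).trans (hkI _ (le_max_left _ _)).symm
    · exact (hkK j (le_trans (le_max_right _ _) hj)).symm.trans (hkK _ (le_max_right _ _))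
  choose k hk using stab
  set R : ℕ → Submodule A M := fun n => Im n (k n) with hRdef
  set K : ℕ → Submodule A M := fun n => Ker n (k n) with hKdef
  have hmemK : ∀ {n m}, m ∈ K n ↔ (⇑F)^[k n] m ∈ (I ^ n • ⊤ : Submodule A M) := Iff.rfl
  have hJR : ∀ n, (I ^ n • ⊤ : Submodule A M) ≤ R n := fun n => le_sup_right
  have hJK : ∀ n, (I ^ n • ⊤ : Submodule A M) ≤ K n := fun n m hm =>
    hmemK.mpr (TF.FJk I φ hφI F hF n (k n) m hm)
  have hFR : ∀ n, ∀ m ∈ R n, F m ∈ R n := by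
    intro n m hm
    obtain ⟨y, ⟨x, rfl⟩, ι, hι, rfl⟩ := Submodule.mem_sup.mp hm
    rw [map_add]
    refine Submodule.add_mem_sup ⟨F x, ?_⟩ (TF.FJ I φ hφI F hF n _ hι)
    rw [← Function.iterate_succ_apply, Function.iterate_succ_apply']
  have hFK : ∀ n, ∀ m ∈ K n, F m ∈ K n := by
    intro n m hm
    refine hmemK.mpr ?_
    rw [← Function.iterate_succ_apply, Function.iterate_succ_apply']
    exact TF.FJ I φ hφI F hF n _ (hmemK.mp hm)
  have hdec : ∀ n (m : M), ∃ r ∈ R n, m - r ∈ K n := by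
    intro n m
    have h1 : (⇑F)^[k n] m ∈ Im n (k n + k n) := by
      rw [(hk n (k n + k n) (Nat.le_add_right _ _)).1]
      exact Submodule.mem_sup_left ⟨m, rfl⟩
    obtain ⟨y, ⟨x, rfl⟩, ι, hι, hsum⟩ := Submodule.mem_sup.mp h1
    refine ⟨(⇑F)^[k n] x, Submodule.mem_sup_left ⟨x, rfl⟩, hmemK.mpr ?_⟩
    rw [iterate_map_sub]
    have h2 : (⇑F)^[k n + k n] x = (⇑F)^[k n] ((⇑F)^[k n] x) := Function.iterate_add_apply _ _ _ _
    rw [← h2, ← hsum]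
    simpa using hι
  have hRK : ∀ n, ∀ m ∈ R n, m ∈ K n → m ∈ (I ^ n • ⊤ : Submodule A M) := by
    intro n m hmR hmK
    obtain ⟨y, ⟨x, rfl⟩, ι, hι, rfl⟩ := Submodule.mem_sup.mp hmR
    have h1 : (⇑F)^[k n] ((⇑F)^[k n] x + ι) ∈ (I ^ n • ⊤ : Submodule A M) := hmemK.mp hmK
    rw [iterate_map_add] at h1
    have h2 : (⇑F)^[k n] ((⇑F)^[k n] x) ∈ (I ^ n • ⊤ : Submodule A M) := by
      have h3 := Submodule.sub_mem _ h1 (TF.FJk I φ hφI F hF n (k n) ι hι)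
      simpa using h3
    have h4 : x ∈ Ker n (k n + k n) := by
      show (⇑F)^[k n + k n] x ∈ (I ^ n • ⊤ : Submodule A M)
      rw [Function.iterate_add_apply]
      exact h2
    rw [(hk n (k n + k n) (Nat.le_add_right _ _)).2] at h4
    exact Submodule.add_mem _ (hmemK.mp h4) hι
  have hinj : ∀ n, ∀ m ∈ R n, F m ∈ (I ^ n • ⊤ : Submodule A M) →
      m ∈ (I ^ n • ⊤ : Submodule A M) := by
    intro n m hmR hFm
    have h1 : m ∈ Ker n (k n + 1) := by
      show (⇑F)^[k n + 1] m ∈ (I ^ n • ⊤ : Submodule A M)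
      rw [Function.iterate_succ_apply]
      exact TF.FJk I φ hφI F hF n (k n) _ hFm
    rw [(hk n (k n + 1) (Nat.le_succ _)).2] at h1
    exact hRK n m hmR h1
  have hsurj : ∀ n, ∀ m ∈ R n, ∃ x ∈ R n, F x - m ∈ (I ^ n • ⊤ : Submodule A M) := by
    intro n m hmR
    have hmR' : m ∈ Im n (k n + 1) := by
      rw [(hk n (k n + 1) (Nat.le_succ _)).1]; exact hmR
    obtain ⟨y, ⟨x, rfl⟩, ι, hι, rfl⟩ := Submodule.mem_sup.mp hmR'
    refine ⟨(⇑F)^[k n] x, Submodule.mem_sup_left ⟨x, rfl⟩, ?_⟩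
    have h1 : F ((⇑F)^[k n] x) = (⇑F)^[k n + 1] x := (Function.iterate_succ_apply' F _ x).symm
    rw [h1]
    have h2 : (⇑F)^[k n + 1] x - ((⇑F)^[k n + 1] x + ι) = -ι := by abel
    rw [h2]
    exact Submodule.neg_mem _ hι
  have hcompat : ∀ {a b : ℕ}, a ≤ b → R b ≤ R a ∧ K b ≤ K a := by
    intro a b hab
    set c := max (k a) (k b) with hc
    constructor
    · show Im b (k b) ≤ Im a (k a)
      rw [← (hk b c (le_max_right _ _)).1, ← (hk a c (le_max_left _ _)).1]
      exact sup_le le_sup_left (le_trans (hJle hab) le_sup_right)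
    · show Ker b (k b) ≤ Ker a (k a)
      rw [← (hk b c (le_max_right _ _)).2, ← (hk a c (le_max_left _ _)).2]
      intro m hm
      exact hJle hab hm
  have hKer_le_K : ∀ n j, Ker n j ≤ K n := by
    intro n j
    have h1 : Ker n j ≤ Ker n (max j (k n)) := hKer_mono n (le_max_left _ _)
    rw [(hk n (max j (k n)) (le_max_right _ _)).2] at h1
    exact h1
  -- the two submodules
  refine ⟨⨅ n, R n, ⨅ n, K n, ?_⟩
  have hdisj0 : ∀ m, m ∈ (⨅ n, R n : Submodule A M) → m ∈ (⨅ n, K n : Submodule A M) → m = 0 := by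
    intro m h1 h2
    exact TF.hausdorff I fun n => hRK n m (Submodule.mem_iInf _ |>.mp h1 n)
      (Submodule.mem_iInf _ |>.mp h2 n)
  have hcodisj0 : ∀ m : M, ∃ r ∈ (⨅ n, R n : Submodule A M), m - r ∈ (⨅ n, K n : Submodule A M) := by
    intro m
    choose r hr1 hr2 using fun n => hdec n m
    have hc : ∀ a b : ℕ, a ≤ b → r a - r b ∈ (I ^ a • ⊤ : Submodule A M) := by
      intro a b hab
      have h1 : r a - r b ∈ R a := Submodule.sub_mem _ (hr1 a) ((hcompat hab).1 (hr1 b))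
      have h2 : r a - r b ∈ K a := by
        have h3 := Submodule.sub_mem _ ((hcompat hab).2 (hr2 b)) (hr2 a)
        have h4 : (m - r b) - (m - r a) = r a - r b := by abel
        rwa [h4] at h3
      exact hRK a _ h1 h2
    obtain ⟨L, hL⟩ := TF.precomplete I r hc
    refine ⟨L, Submodule.mem_iInf _ |>.mpr fun n => ?_, Submodule.mem_iInf _ |>.mpr fun n => ?_⟩
    · have h1 : L = r n - (r n - L) := by abel
      rw [h1]
      exact Submodule.sub_mem _ (hr1 n) (hJR n (hL n))
    · have h1 : m - L = (m - r n) + (r n - L) := by abel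
      rw [h1]
      exact Submodule.add_mem _ (hr2 n) (hJK n (hL n))
  have hdisj : Disjoint (⨅ n, R n : Submodule A M) (⨅ n, K n : Submodule A M) :=
    Submodule.disjoint_def.mpr hdisj0
  have hcodisj : Codisjoint (⨅ n, R n : Submodule A M) (⨅ n, K n : Submodule A M) := by
    rw [codisjoint_iff_le_sup]
    intro m _
    obtain ⟨x, hx1, hx2⟩ := hcodisj0 m
    exact Submodule.mem_sup.mpr ⟨x, hx1, m - x, hx2, by abel⟩
  have hFord : ∀ m ∈ (⨅ n, R n : Submodule A M), F m ∈ (⨅ n, R n : Submodule A M) := by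
    intro m hm
    exact Submodule.mem_iInf _ |>.mpr fun n => hFR n m (Submodule.mem_iInf _ |>.mp hm n)
  have hFnil : ∀ m ∈ (⨅ n, K n : Submodule A M), F m ∈ (⨅ n, K n : Submodule A M) := by
    intro m hm
    exact Submodule.mem_iInf _ |>.mpr fun n => hFK n m (Submodule.mem_iInf _ |>.mp hm n)
  have hFnil_iter : ∀ (j : ℕ), ∀ m ∈ (⨅ n, K n : Submodule A M),
      (⇑F)^[j] m ∈ (⨅ n, K n : Submodule A M) := by
    intro j
    induction j with
    | zero => intro m hm; exact hm
    | succ j ih =>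
      intro m hm
      rw [Function.iterate_succ_apply']
      exact hFnil _ (ih m hm)
  refine ⟨⟨hdisj, hcodisj⟩, hFord, ⟨?_, ?_, ?_⟩, hFnil, ?_, ?_, ?_⟩
  · -- MapsTo
    intro m hm
    exact hFord m hm
  · -- InjOn
    intro x hx y hy hxy
    have h1 : x - y = 0 := by
      refine TF.hausdorff I fun n => ?_
      refine hinj n _ (Submodule.sub_mem _ (Submodule.mem_iInf _ |>.mp hx n)
        (Submodule.mem_iInf _ |>.mp hy n)) ?_
      rw [map_sub, hxy, sub_self]
      exact Submodule.zero_mem _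
    exact sub_eq_zero.mp h1
  · -- SurjOn
    intro m hm
    choose x hx1 hx2 using fun n => hsurj n m (Submodule.mem_iInf _ |>.mp hm n)
    have hc : ∀ a b : ℕ, a ≤ b → x a - x b ∈ (I ^ a • ⊤ : Submodule A M) := by
      intro a b hab
      refine hinj a _ (Submodule.sub_mem _ (hx1 a) ((hcompat hab).1 (hx1 b))) ?_
      rw [map_sub]
      have h1 : F (x a) - F (x b) = (F (x a) - m) - (F (x b) - m) := by abel
      rw [h1]
      exact Submodule.sub_mem _ (hx2 a) (hJle hab (hx2 b))
    obtain ⟨X, hX⟩ := TF.precomplete I x hc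
    have hXmem : X ∈ (⨅ n, R n : Submodule A M) := by
      refine Submodule.mem_iInf _ |>.mpr fun n => ?_
      have h1 : X = x n - (x n - X) := by abel
      rw [h1]
      exact Submodule.sub_mem _ (hx1 n) (hJR n (hX n))
    refine ⟨X, hXmem, ?_⟩
    have h1 : F X - m = 0 := by
      refine TF.hausdorff I fun n => ?_
      have h2 : F X - m = (F (x n) - m) - F (x n - X) := by
        rw [map_sub]; abel
      rw [h2]
      exact Submodule.sub_mem _ (hx2 n) (TF.FJ I φ hφI F hF n _ (hX n))
    have := sub_eq_zero.mp h1
    exact this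
  · -- topological nilpotence
    intro n
    refine ⟨k n, fun m hm => ?_⟩
    have h1 : (⇑F)^[k n] m ∈ (I ^ n • ⊤ : Submodule A M) :=
      hmemK.mp (Submodule.mem_iInf _ |>.mp hm n)
    have h2 : (⇑F)^[k n] m ∈ (⨅ n, K n : Submodule A M) := hFnil_iter (k n) m hm
    have hsplit : (I ^ n • ⊤ : Submodule A M) =
        I ^ n • (⨅ n, R n : Submodule A M) ⊔ I ^ n • (⨅ n, K n : Submodule A M) := by
      rw [← Submodule.smul_sup, codisjoint_iff.mp hcodisj]
    rw [hsplit] at h1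
    obtain ⟨a, ha, b, hb, hab⟩ := Submodule.mem_sup.mp h1
    have ha1 : a ∈ (⨅ n, R n : Submodule A M) := Submodule.smul_le_right ha
    have ha2 : a ∈ (⨅ n, K n : Submodule A M) := by
      have hbK : b ∈ (⨅ n, K n : Submodule A M) := Submodule.smul_le_right hb
      have : a = (⇑F)^[k n] m - b := by rw [← hab]; abel
      rw [this]
      exact Submodule.sub_mem _ h2 hbK
    have ha0 : a = 0 := hdisj0 a ha1 ha2
    rw [← hab, ha0, zero_add]
    exact hb
  · -- maximality of Mord
    intro N hNst hNbij
    have hsurjN : ∀ (j : ℕ), ∀ m ∈ N, ∃ x ∈ N, (⇑F)^[j] x = m := by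
      intro j
      induction j with
      | zero => intro m hm; exact ⟨m, hm, rfl⟩
      | succ j ih =>
        intro m hm
        obtain ⟨y, hy, hFy⟩ := hNbij.2.2 hm
        obtain ⟨x, hx, hfx⟩ := ih y hy
        refine ⟨x, hx, ?_⟩
        rw [Function.iterate_succ_apply', hfx, hFy]
    intro m hm
    refine Submodule.mem_iInf _ |>.mpr fun n => ?_
    obtain ⟨x, _, hfx⟩ := hsurjN (k n) m hm
    exact Submodule.mem_sup_left ⟨x, hfx⟩
  · -- maximality of Mnil
    intro N hNst hNnil m hm
    refine Submodule.mem_iInf _ |>.mpr fun n => ?_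
    obtain ⟨k', hk'⟩ := hNnil n
    have h1 : (⇑F)^[k'] m ∈ (I ^ n • ⊤ : Submodule A M) :=
      Submodule.smul_mono (le_refl (I ^ n)) le_top (hk' m hm)
    exact hKer_le_K n k' h1
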